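/- The Median Deterministic Mechanism has approximation ratio at most 3 for the maximum average group cost objective: for any profile r, magc(x_med, r) <= 3 * magc(y*, r), where x_med is the median of all agent locations and y* minimizes magc. -/

import Mathlib

open Finset

variable {n m : ℕ}

/-- Members of group `j`. -/
def grp (g : Fin n → Fin m) (j : Fin m) : Finset (Fin n) :=
  Finset.univ.filter (fun i => g i = j)

/-- Maximum total group cost. -/
noncomputable def mtgc (x : Fin n → ℝ) (g : Fin n → Fin m) (y : ℝ) : ℝ :=
  ⨆ j : Fin m, ∑ i ∈ grp g j, |y - x i|

/-- Maximum average group cost. -/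
noncomputable def magc (x : Fin n → ℝ) (g : Fin n → Fin m) (y : ℝ) : ℝ :=
  ⨆ j : Fin m, (∑ i ∈ grp g j, |y - x i|) / (grp g j).card

/-- Left median of a multiset of reals (`⌈k/2⌉`-th smallest). -/
noncomputable def medianOf (s : Multiset ℝ) : ℝ :=
  (s.sort (· ≤ ·)).getD ((Multiset.card s - 1) / 2) 0

/-- Left median of the locations of the members of group `j`. -/
noncomputable def groupMedian (x : Fin n → ℝ) (g : Fin n → Fin m) (j : Fin m) : ℝ :=
  medianOf ((grp g j).val.map x)

/-- A largest group, ties broken by the smallest index. -/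
noncomputable def majGroup (g : Fin n → Fin m) [NeZero m] : Fin m :=
  (Finset.univ.filter
    (fun j => ∀ k : Fin m, (grp g k).card ≤ (grp g j).card)).min' (by
      obtain ⟨b, -, hb⟩ :=
        Finset.exists_max_image Finset.univ (fun j => (grp g j).card) Finset.univ_nonempty
      exact ⟨b, Finset.mem_filter.mpr ⟨Finset.mem_univ _, fun k => hb k (Finset.mem_univ k)⟩⟩)

/-- Majority Group Deterministic Mechanism. -/
noncomputable def MGDM (x : Fin n → ℝ) (g : Fin n → Fin m) [NeZero m] : ℝ :=
  groupMedian x g (majGroup g)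

noncomputable def avgc (x : Fin n → ℝ) (g : Fin n → Fin m) (j : Fin m) (y : ℝ) : ℝ :=
  (∑ i ∈ grp g j, |y - x i|) / (grp g j).card

noncomputable def maxc (x : Fin n → ℝ) (g : Fin n → Fin m) (j : Fin m) (y : ℝ) : ℝ :=
  sSup ((fun i => |y - x i|) '' {i | g i = j})

noncomputable def minc (x : Fin n → ℝ) (g : Fin n → Fin m) (j : Fin m) (y : ℝ) : ℝ :=
  sInf ((fun i => |y - x i|) '' {i | g i = j})

noncomputable def IIF1 (x : Fin n → ℝ) (g : Fin n → Fin m) (y : ℝ) : ℝ :=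
  (⨆ j : Fin m, avgc x g j y) + ⨆ j : Fin m, (maxc x g j y - minc x g j y)
/-- Median of all agent locations (the `⌈n/2⌉`-th smallest). -/
noncomputable def allMedian (x : Fin n → ℝ) : ℝ :=
  medianOf (Finset.univ.val.map x)

lemma grp_nonempty (g : Fin n → Fin m) (hg : Function.Surjective g) (j : Fin m) :
    (grp g j).Nonempty := by
  obtain ⟨i, hi⟩ := hg j
  exact ⟨i, by simp [grp, hi]⟩

lemma magc_bdd (x : Fin n → ℝ) (g : Fin n → Fin m) (y : ℝ) :
    BddAbove (Set.range fun j : Fin m => (∑ i ∈ grp g j, |y - x i|) / (grp g j).card) :=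
  (Set.finite_range _).bddAbove

lemma avgc_le_magc [NeZero m] (x : Fin n → ℝ) (g : Fin n → Fin m) (y : ℝ) (j : Fin m) :
    (∑ i ∈ grp g j, |y - x i|) / (grp g j).card ≤ magc x g y :=
  le_ciSup (magc_bdd x g y) j

lemma magc_lip [NeZero m] (x : Fin n → ℝ) (g : Fin n → Fin m)
    (hg : Function.Surjective g) (y z : ℝ) :
    magc x g y ≤ magc x g z + |y - z| := by
  apply ciSup_le
  intro j
  have hc : (0:ℝ) < (grp g j).card := by
    exact_mod_cast Finset.card_pos.mpr (grp_nonempty g hg j)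
  have h1 : ∑ i ∈ grp g j, |y - x i| ≤ (∑ i ∈ grp g j, |z - x i|) + (grp g j).card * |y - z| := by
    have := Finset.sum_le_sum (f := fun i => |y - x i|)
      (g := fun i => |z - x i| + |y - z|) (s := grp g j) (fun i _ => by
        calc |y - x i| = |(z - x i) + (y - z)| := by ring_nf
          _ ≤ |z - x i| + |y - z| := abs_add_le _ _)
    simpa [Finset.sum_add_distrib, mul_comm] using this
  calc (∑ i ∈ grp g j, |y - x i|) / (grp g j).card
      ≤ ((∑ i ∈ grp g j, |z - x i|) + (grp g j).card * |y - z|) / (grp g j).card := by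
        gcongr
    _ = (∑ i ∈ grp g j, |z - x i|) / (grp g j).card + |y - z| := by
        field_simp
    _ ≤ magc x g z + |y - z| := by
        gcongr; exact avgc_le_magc x g z j

lemma key [NeZero m] (x : Fin n → ℝ) (g : Fin n → Fin m) (hg : Function.Surjective g)
    (L : Finset (Fin n)) (hL : n ≤ 2 * L.card) (y c : ℝ) (hc : 0 ≤ c)
    (h : ∀ i ∈ L, c ≤ |y - x i|) : c ≤ 2 * magc x g y := by
  -- pigeonhole: some group has at least half its members in L
  have hsum : ∑ j : Fin m, (grp g j).card = n := by
    have := Finset.card_eq_sum_card_fiberwise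
      (f := g) (s := (univ : Finset (Fin n))) (t := univ) (fun i _ => mem_univ _)
    simpa [grp] using this.symm
  have hsumL : ∑ j : Fin m, (L.filter fun i => g i = j).card = L.card := by
    exact (Finset.card_eq_sum_card_fiberwise (f := g) (s := L) (t := univ)
      (fun i _ => mem_univ _)).symm
  have hj : ∃ j : Fin m, (grp g j).card ≤ 2 * (L.filter fun i => g i = j).card := by
    by_contra hcon
    push_neg at hcon
    have : ∑ j : Fin m, 2 * (L.filter fun i => g i = j).card < ∑ j : Fin m, (grp g j).card :=
      Finset.sum_lt_sum_of_nonempty univ_nonempty (fun j _ => hcon j)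
    rw [← Finset.mul_sum, hsumL, hsum] at this
    omega
  obtain ⟨j, hj⟩ := hj
  have hsub : (L.filter fun i => g i = j) ⊆ grp g j := by
    intro i hi
    simp only [grp, mem_filter, mem_univ, true_and]
    exact (mem_filter.mp hi).2
  have hcG : (0:ℝ) < (grp g j).card := by
    exact_mod_cast Finset.card_pos.mpr (grp_nonempty g hg j)
  have hS : ((L.filter fun i => g i = j).card : ℝ) * c ≤ ∑ i ∈ grp g j, |y - x i| := by
    calc ((L.filter fun i => g i = j).card : ℝ) * c
        = ∑ _i ∈ (L.filter fun i => g i = j), c := by rw [Finset.sum_const, nsmul_eq_mul]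
      _ ≤ ∑ i ∈ (L.filter fun i => g i = j), |y - x i| :=
          Finset.sum_le_sum (fun i hi => h i (mem_filter.mp hi).1)
      _ ≤ ∑ i ∈ grp g j, |y - x i| :=
          Finset.sum_le_sum_of_subset_of_nonneg hsub (fun i _ _ => abs_nonneg _)
  have havg : c ≤ 2 * ((∑ i ∈ grp g j, |y - x i|) / (grp g j).card) := by
    rw [mul_div_assoc' , le_div_iff₀ hcG]
    calc c * (grp g j).card ≤ c * (2 * (L.filter fun i => g i = j).card) := by
          gcongr
          exact_mod_cast hj
      _ = 2 * (((L.filter fun i => g i = j).card : ℝ) * c) := by ring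
      _ ≤ 2 * ∑ i ∈ grp g j, |y - x i| := by linarith
  refine havg.trans ?_
  gcongr
  exact avgc_le_magc x g y j

lemma median_counts (x : Fin n → ℝ) (hn : 0 < n) :
    n ≤ 2 * ((univ : Finset (Fin n)).filter fun i => x i ≤ allMedian x).card ∧
    n ≤ 2 * ((univ : Finset (Fin n)).filter fun i => allMedian x ≤ x i).card := by
  classical
  set s : Multiset ℝ := Finset.univ.val.map x with hs
  set l : List ℝ := s.sort (· ≤ ·) with hl
  have hlen : l.length = n := by
    simp [hl, hs, Multiset.length_sort]
  have hsorted : l.Pairwise (· ≤ ·) := Multiset.pairwise_sort _ _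
  have hcard : Multiset.card s = n := by simp [hs]
  set k : ℕ := (n - 1) / 2 with hk
  have hkn : k < l.length := by rw [hlen]; omega
  have hmono : ∀ i j : ℕ, ∀ hj : j < l.length, ∀ _hij : i ≤ j, l[i]'(by omega) ≤ l[j]'hj := by
    intro i j hj hij
    have := hsorted.rel_get_of_le (a := ⟨i, by omega⟩) (b := ⟨j, hj⟩) (Fin.mk_le_mk.mpr hij)
    simpa using this
  have hmed : allMedian x = l[k]'hkn := by
    rw [allMedian, medianOf, ← hs, ← hl, hcard, ← hk, List.getD_eq_getElem _ _ hkn]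
  have hcount : ∀ (p : ℝ → Prop) (hp : DecidablePred p),
      ((univ : Finset (Fin n)).filter fun i => p (x i)).card = l.countP (fun a => decide (p a)) := by
    intro p hp
    have h1 : l.countP (fun a => decide (p a)) = Multiset.countP p s := by
      rw [hl, ← Multiset.coe_countP, Multiset.sort_eq]
    rw [h1, hs, Multiset.countP_map]
    simp [Finset.card_filter, Finset.filter]
  constructor
  · have h1 : k + 1 ≤ l.countP (fun a => decide (a ≤ allMedian x)) := by
      have hsub : (l.take (k+1)).countP (fun a => decide (a ≤ allMedian x)) ≤
          l.countP (fun a => decide (a ≤ allMedian x)) :=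
        (List.take_sublist _ _).countP_le
      have hall : (l.take (k+1)).countP (fun a => decide (a ≤ allMedian x)) = (l.take (k+1)).length := by
        rw [List.countP_eq_length]
        intro a ha
        obtain ⟨i, hi, hia⟩ := List.mem_take_iff_getElem.mp ha
        simp only [decide_eq_true_eq]
        rw [← hia, hmed]
        exact hmono i k hkn (by omega)
      rw [hall, List.length_take] at hsub
      omega
    rw [hcount (fun a => a ≤ allMedian x) inferInstance]
    omega
  · have h1 : n - k ≤ l.countP (fun a => decide (allMedian x ≤ a)) := by
      have hsub : (l.drop k).countP (fun a => decide (allMedian x ≤ a)) ≤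
          l.countP (fun a => decide (allMedian x ≤ a)) :=
        (List.drop_sublist _ _).countP_le
      have hall : (l.drop k).countP (fun a => decide (allMedian x ≤ a)) = (l.drop k).length := by
        rw [List.countP_eq_length]
        intro a ha
        obtain ⟨i, hi, hia⟩ := List.mem_iff_getElem.mp ha
        have hi' : k + i < l.length := by rw [List.length_drop] at hi; omega
        simp only [decide_eq_true_eq]
        rw [← hia, List.getElem_drop, hmed]
        exact hmono k (k+i) hi' (by omega)
      rw [hall, List.length_drop] at hsub
      omega
    rw [hcount (fun a => allMedian x ≤ a) inferInstance]
    omega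


/-- The Median Deterministic Mechanism has approximation ratio at most 3 for
the maximum average group cost. -/
theorem stmt9 [NeZero m] (x : Fin n → ℝ) (g : Fin n → Fin m)
    (hg : Function.Surjective g) (ystar : ℝ)
    (hopt : ∀ z : ℝ, magc x g ystar ≤ magc x g z) :
    magc x g (allMedian x) ≤ 3 * magc x g ystar := by
  classical
  have hn : 0 < n := by
    obtain ⟨i, -⟩ := hg ⟨0, Nat.pos_of_ne_zero (NeZero.ne m)⟩
    exact i.pos
  obtain ⟨hL, hR⟩ := median_counts x hn
  set med := allMedian x with hm
  have hdist : |med - ystar| ≤ 2 * magc x g ystar := by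
    rcases le_total med ystar with h | h
    · have hkey := key x g hg (univ.filter fun i => x i ≤ med) hL ystar (ystar - med)
        (by linarith) (fun i hi => by
          have hx : x i ≤ med := (mem_filter.mp hi).2
          exact le_trans (by linarith) (le_abs_self (ystar - x i)))
      rw [abs_sub_comm, abs_of_nonneg (by linarith)]
      exact hkey
    · have hkey := key x g hg (univ.filter fun i => med ≤ x i) hR ystar (med - ystar)
        (by linarith) (fun i hi => by
          have hx : med ≤ x i := (mem_filter.mp hi).2
          rw [abs_sub_comm]
          exact le_trans (by linarith) (le_abs_self (x i - ystar)))
      rw [abs_of_nonneg (by linarith)]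
      exact hkey
  calc magc x g med ≤ magc x g ystar + |med - ystar| := magc_lip x g hg med ystar
    _ ≤ magc x g ystar + 2 * magc x g ystar := by linarith
    _ = 3 * magc x g ystar := by ring
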